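/- For β ∈ {1,…,n−1}^k, let λ_β = −π²∑ₗ βₗ²c_{βₗ} with c_l = ((lπ)/(2n))^{−2}sin²(lπ/(2n)). Then there exists a constant C (depending only on k) such that |−1/(π²|β|²) − 1/λ_β| ≤ C/(|β| n) for all n ≥ 2 and all β ∈ {1,…,n−1}^k. -/

import Mathlib

open scoped BigOperators Real

/-- `c_l = (lπ/(2n))^{-2} sin²(lπ/(2n))`. -/
noncomputable def cCoef (n l : ℕ) : ℝ :=
  ((l : ℝ) * π / (2 * n)) ^ (-2 : ℤ) * Real.sin ((l : ℝ) * π / (2 * n)) ^ 2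

lemma sub_cube_le_sin {x : ℝ} (hx : 0 ≤ x) : x - x ^ 3 / 6 ≤ Real.sin x := by
  have hd : ∀ y : ℝ, HasDerivAt (fun x : ℝ => Real.sin x - x + x ^ 3 / 6)
      (Real.cos y - 1 + y ^ 2 / 2) y := by
    intro y
    have h1 : HasDerivAt (fun x : ℝ => Real.sin x - x + x ^ 3 / 6)
        (Real.cos y - 1 + (3 : ℕ) * y ^ (3 - 1) / 6) y :=
      ((Real.hasDerivAt_sin y).sub (hasDerivAt_id y)).add
        ((hasDerivAt_pow 3 y).div_const 6)
    convert h1 using 1; norm_num; ring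
  have hmono : MonotoneOn (fun x : ℝ => Real.sin x - x + x ^ 3 / 6) (Set.Ici 0) := by
    refine monotoneOn_of_deriv_nonneg (convex_Ici 0) ?_ ?_ ?_
    · exact fun y _ => ((hd y).continuousAt).continuousWithinAt
    · exact fun y _ => ((hd y).differentiableAt).differentiableWithinAt
    · intro y _
      rw [(hd y).deriv]
      have := Real.one_sub_sq_div_two_le_cos (x := y)
      linarith
  have h0 : (fun x : ℝ => Real.sin x - x + x ^ 3 / 6) 0 ≤
      (fun x : ℝ => Real.sin x - x + x ^ 3 / 6) x :=
    hmono Set.self_mem_Ici hx hx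
  simp only [Real.sin_zero] at h0
  norm_num at h0
  linarith

lemma cCoef_bounds {n l : ℕ} (hn : 2 ≤ n) (hl1 : 1 ≤ l) (hl2 : l ≤ n - 1) :
    4 / π ^ 2 ≤ cCoef n l ∧ cCoef n l ≤ 1 ∧
      1 - cCoef n l ≤ π ^ 2 * l ^ 2 / (12 * n ^ 2) := by
  have hπ := Real.pi_pos
  have hn0 : (0 : ℝ) < n := by positivity
  have hl0 : (1 : ℝ) ≤ (l : ℝ) := by exact_mod_cast hl1
  set x : ℝ := (l : ℝ) * π / (2 * n) with hxdef
  have hx0 : 0 < x := by positivity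
  have hln : (l : ℝ) < n := by
    have : l < n := lt_of_le_of_lt hl2 (Nat.sub_lt (by omega) one_pos)
    exact_mod_cast this
  have hxhalf : x ≤ π / 2 := by
    rw [hxdef, div_le_div_iff₀ (by positivity) (by norm_num)]
    nlinarith
  have hc : cCoef n l = Real.sin x ^ 2 / x ^ 2 := by
    rw [cCoef, ← hxdef]
    rw [show ((-2 : ℤ) = -(2 : ℕ)) from rfl, zpow_neg, zpow_natCast]
    rw [inv_mul_eq_div]
  have hsin0 : 0 < Real.sin x := Real.sin_pos_of_pos_of_lt_pi hx0 (by linarith)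
  have hx2 : (0:ℝ) < x ^ 2 := by positivity
  refine ⟨?_, ?_, ?_⟩
  · have hj : 2 / π * x ≤ Real.sin x := Real.mul_le_sin hx0.le hxhalf
    rw [hc, div_le_div_iff₀ (by positivity) hx2]
    have h : (2 / π * x) ^ 2 ≤ Real.sin x ^ 2 := pow_le_pow_left₀ (by positivity) hj 2
    have h2 : (2 / π * x) ^ 2 * π ^ 2 = 4 * x ^ 2 := by field_simp; ring
    nlinarith [mul_le_mul_of_nonneg_right h (sq_nonneg π)]
  · rw [hc, div_le_one hx2]
    exact Real.sin_sq_le_sq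
  · have hcube : x - x ^ 3 / 6 ≤ Real.sin x := sub_cube_le_sin hx0.le
    have hsinle : Real.sin x ≤ x := (Real.sin_lt hx0).le
    have key : x ^ 2 - Real.sin x ^ 2 ≤ x ^ 4 / 3 := by nlinarith
    have h1c : 1 - cCoef n l ≤ x ^ 2 / 3 := by
      rw [hc]
      rw [sub_div' hx2.ne', div_le_div_iff₀ hx2 (by norm_num : (0:ℝ) < 3)]
      nlinarith
    have hxval : x ^ 2 / 3 = π ^ 2 * l ^ 2 / (12 * n ^ 2) := by
      rw [hxdef]; field_simp; ring
    exact h1c.trans_eq hxval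

set_option maxHeartbeats 1000000 in
/-- with `λ_β = -π² ∑ l, βₗ² c_{βₗ}`, there is a constant `C` (depending only
on `k`) such that `|-1/(π²|β|²) - 1/λ_β| ≤ C/(|β| n)` for all `n ≥ 2` and
`β ∈ {1,…,n-1}^k`. -/
theorem stmt16 (k : ℕ) (hk : 1 ≤ k) :
    ∃ C : ℝ, 0 < C ∧ ∀ n : ℕ, 2 ≤ n → ∀ β : Fin k → ℕ,
      (∀ l, 1 ≤ β l ∧ β l ≤ n - 1) →
      |(-1 / (π ^ 2 * ∑ l, (β l : ℝ) ^ 2)) -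
          1 / (-π ^ 2 * ∑ l, (β l : ℝ) ^ 2 * cCoef n (β l))| ≤
        C / (Real.sqrt (∑ l, (β l : ℝ) ^ 2) * n) := by
  refine ⟨k, by exact_mod_cast Nat.lt_of_lt_of_le one_pos hk, ?_⟩
  intro n hn β hβ
  have hπ := Real.pi_pos
  have hn0 : (0 : ℝ) < n := by positivity
  have hk1 : (1 : ℝ) ≤ (k : ℝ) := by exact_mod_cast hk
  set S : ℝ := ∑ l, (β l : ℝ) ^ 2 with hSdef
  set T : ℝ := ∑ l, (β l : ℝ) ^ 2 * cCoef n (β l) with hTdef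
  have hbounds : ∀ l : Fin k, 4 / π ^ 2 ≤ cCoef n (β l) ∧ cCoef n (β l) ≤ 1 ∧
      1 - cCoef n (β l) ≤ π ^ 2 * (β l) ^ 2 / (12 * n ^ 2) :=
    fun l => cCoef_bounds hn (hβ l).1 (hβ l).2
  have hb1 : ∀ l : Fin k, (1 : ℝ) ≤ (β l : ℝ) := fun l => by exact_mod_cast (hβ l).1
  have hbn : ∀ l : Fin k, (β l : ℝ) ≤ n := fun l => by
    have : β l ≤ n := le_trans (hβ l).2 (Nat.sub_le n 1)
    exact_mod_cast this
  -- S ≥ 1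
  have hS1 : (1 : ℝ) ≤ S := by
    calc (1 : ℝ) ≤ (β ⟨0, hk⟩ : ℝ) ^ 2 := by nlinarith [hb1 ⟨0, hk⟩]
      _ ≤ S := Finset.single_le_sum (f := fun l => (β l : ℝ) ^ 2)
          (fun l _ => by positivity) (Finset.mem_univ _)
  have hS0 : (0 : ℝ) < S := by linarith
  -- S ≤ k n²
  have hSk : S ≤ (k : ℝ) * n ^ 2 := by
    calc S ≤ ∑ _l : Fin k, (n : ℝ) ^ 2 :=
          Finset.sum_le_sum fun l _ => by nlinarith [hb1 l, hbn l]
      _ = (k : ℝ) * n ^ 2 := by simp [mul_comm]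
  -- T ≤ S
  have hTS : T ≤ S :=
    Finset.sum_le_sum fun l _ => by nlinarith [(hbounds l).2.1, sq_nonneg ((β l : ℝ))]
  -- 4 S ≤ π² T
  have hT4 : 4 * S ≤ π ^ 2 * T := by
    rw [hSdef, hTdef, Finset.mul_sum, Finset.mul_sum]
    refine Finset.sum_le_sum fun l _ => ?_
    have h := (hbounds l).1
    have h2 : 4 / π ^ 2 * (β l : ℝ) ^ 2 ≤ cCoef n (β l) * (β l : ℝ) ^ 2 := by
      nlinarith [sq_nonneg ((β l : ℝ))]
    have hπ2 : (0 : ℝ) < π ^ 2 := by positivity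
    calc 4 * (β l : ℝ) ^ 2 = π ^ 2 * (4 / π ^ 2 * (β l : ℝ) ^ 2) := by field_simp
      _ ≤ π ^ 2 * (cCoef n (β l) * (β l : ℝ) ^ 2) := by nlinarith
      _ = π ^ 2 * ((β l : ℝ) ^ 2 * cCoef n (β l)) := by ring
  have hT0 : (0 : ℝ) < T := by nlinarith
  -- 12 n² (S - T) ≤ π² S²
  have hST12 : 12 * (n : ℝ) ^ 2 * (S - T) ≤ π ^ 2 * S ^ 2 := by
    have h1 : S - T = ∑ l, (β l : ℝ) ^ 2 * (1 - cCoef n (β l)) := by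
      rw [hSdef, hTdef, ← Finset.sum_sub_distrib]; congr 1; ext l; ring
    have h2 : S - T ≤ ∑ l, (β l : ℝ) ^ 2 * (π ^ 2 * (β l) ^ 2 / (12 * n ^ 2)) := by
      rw [h1]
      exact Finset.sum_le_sum fun l _ =>
        mul_le_mul_of_nonneg_left (hbounds l).2.2 (by positivity)
    have h3 : ∑ l, (β l : ℝ) ^ 2 * (π ^ 2 * (β l) ^ 2 / (12 * n ^ 2)) =
        π ^ 2 / (12 * n ^ 2) * ∑ l, ((β l : ℝ) ^ 2) ^ 2 := by
      rw [Finset.mul_sum]; congr 1; ext l; ring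
    have h4 : ∑ l, ((β l : ℝ) ^ 2) ^ 2 ≤ S ^ 2 := by
      rw [hSdef]
      exact Finset.sum_sq_le_sq_sum_of_nonneg fun l _ => by positivity
    have h5 : S - T ≤ π ^ 2 / (12 * n ^ 2) * S ^ 2 := by
      rw [h3] at h2
      refine h2.trans (mul_le_mul_of_nonneg_left h4 (by positivity))
    have h6 : (0 : ℝ) < 12 * n ^ 2 := by positivity
    calc 12 * (n : ℝ) ^ 2 * (S - T) ≤ 12 * n ^ 2 * (π ^ 2 / (12 * n ^ 2) * S ^ 2) :=
          mul_le_mul_of_nonneg_left h5 (by positivity)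
      _ = π ^ 2 * S ^ 2 := by field_simp
  -- rewrite the LHS
  have hπ2 : (0 : ℝ) < π ^ 2 := by positivity
  have heq : -1 / (π ^ 2 * S) - 1 / (-π ^ 2 * T) = (S - T) / (π ^ 2 * S * T) := by
    field_simp
    ring
  have hST0 : (0 : ℝ) ≤ S - T := by linarith
  rw [heq, abs_of_nonneg (div_nonneg hST0 (by positivity))]
  -- sqrt bound
  have hsq0 : (0 : ℝ) ≤ Real.sqrt S := Real.sqrt_nonneg S
  have hsq1 : (1 : ℝ) ≤ Real.sqrt S := by
    rw [show (1:ℝ) = Real.sqrt 1 by simp]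
    exact Real.sqrt_le_sqrt hS1
  have hsqrtkn : Real.sqrt S ≤ (k : ℝ) * n := by
    have h1 : S ≤ ((k : ℝ) * n) ^ 2 := by nlinarith
    calc Real.sqrt S ≤ Real.sqrt (((k : ℝ) * n) ^ 2) := Real.sqrt_le_sqrt h1
      _ = (k : ℝ) * n := Real.sqrt_sq (by positivity)
  have hpi16 : π ^ 2 ≤ 16 := by nlinarith [Real.pi_le_four, Real.pi_pos]
  have hd1 : (0:ℝ) < π ^ 2 * S * T := by positivity
  have hd2 : (0:ℝ) < Real.sqrt S * n := by nlinarith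
  rw [div_le_div_iff₀ hd1 hd2]
  -- goal : (S - T) * (√S * n) ≤ k * (π² S T)
  have step1 : (S - T) * (Real.sqrt S * n) ≤ (S - T) * ((k : ℝ) * n * n) := by
    apply mul_le_mul_of_nonneg_left _ hST0
    nlinarith
  have step2 : 12 * ((S - T) * ((k : ℝ) * n * n)) = (12 * n ^ 2 * (S - T)) * k := by ring
  have step3 : (12 * (n:ℝ) ^ 2 * (S - T)) * k ≤ (π ^ 2 * S ^ 2) * k :=
    mul_le_mul_of_nonneg_right hST12 (by positivity)
  have step4 : (π ^ 2 * S ^ 2) * (k : ℝ) ≤ 16 * S ^ 2 * k :=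
    mul_le_mul_of_nonneg_right (mul_le_mul_of_nonneg_right hpi16 (sq_nonneg S))
      (le_trans zero_le_one hk1)
  have step5 : 16 * S ^ 2 * (k : ℝ) ≤ 12 * ((k : ℝ) * (π ^ 2 * S * T)) := by
    have := mul_le_mul_of_nonneg_right hT4 (mul_nonneg (by positivity : (0:ℝ) ≤ 12 * k) hS0.le)
    nlinarith
  linarith
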